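/- The Jaccard distance 1 − |A∩B|/|A∪B| is a metric on nonempty finite subsets of a fixed finite set: it is nonnegative, symmetric, zero iff A = B, and satisfies the triangle inequality. -/
import Mathlib

noncomputable def jaccardDist (A B : Finset ℕ) : ℝ :=
  1 - ((A ∩ B).card : ℝ) / (A ∪ B).card

-- key nat lemma
lemma key (A B C : Finset ℕ) :
    ((A ∪ C) \ (A ∩ C)).card + (B \ (A ∪ C)).card ≤
      ((A ∪ B) \ (A ∩ B)).card + ((B ∪ C) \ (B ∩ C)).card := by
  rw [← Finset.card_union_of_disjoint (by
    intro x hx hy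
    simp only [Finset.le_eq_subset, Finset.bot_eq_empty] at *
    intro a ha
    have h1 := hx ha
    have h2 := hy ha
    simp only [Finset.mem_sdiff, Finset.mem_union, Finset.mem_inter] at h1 h2
    tauto)]
  calc _ ≤ (((A ∪ B) \ (A ∩ B)) ∪ ((B ∪ C) \ (B ∩ C))).card := by
        apply Finset.card_le_card
        intro x hx
        simp only [Finset.mem_sdiff, Finset.mem_union, Finset.mem_inter] at *
        tauto
    _ ≤ _ := Finset.card_union_le _ _

lemma jac_eq (A B : Finset ℕ) (h : (A ∪ B).Nonempty) :
    jaccardDist A B = (((A ∪ B) \ (A ∩ B)).card : ℝ) / (A ∪ B).card := by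
  have hc : 0 < ((A ∪ B).card : ℝ) := by
    exact_mod_cast Finset.card_pos.2 h
  rw [jaccardDist, Finset.card_sdiff_of_subset Finset.inter_subset_union]
  have hle : (A ∩ B).card ≤ (A ∪ B).card :=
    Finset.card_le_card Finset.inter_subset_union
  push_cast [hle]
  field_simp

/-- The Jaccard distance is a metric on nonempty finite sets: nonnegative,
symmetric, zero iff equal, and satisfies the triangle inequality. -/
theorem jaccard_dist_is_metric :
    (∀ A B : Finset ℕ, A.Nonempty → B.Nonempty → 0 ≤ jaccardDist A B) ∧
    (∀ A B : Finset ℕ, jaccardDist A B = jaccardDist B A) ∧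
    (∀ A B : Finset ℕ, A.Nonempty → B.Nonempty →
      (jaccardDist A B = 0 ↔ A = B)) ∧
    (∀ A B C : Finset ℕ, A.Nonempty → B.Nonempty → C.Nonempty →
      jaccardDist A C ≤ jaccardDist A B + jaccardDist B C) := by
  refine ⟨?_, ?_, ?_, ?_⟩
  · intro A B hA hB
    rw [jaccardDist, sub_nonneg]
    apply div_le_one_of_le₀
    · exact_mod_cast Finset.card_le_card Finset.inter_subset_union
    · positivity
  · intro A B
    rw [jaccardDist, jaccardDist, Finset.inter_comm, Finset.union_comm]
  · intro A B hA hB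
    have hu : (A ∪ B).Nonempty := hA.mono Finset.subset_union_left
    have hc : 0 < ((A ∪ B).card : ℝ) := by exact_mod_cast Finset.card_pos.2 hu
    rw [jaccardDist, sub_eq_zero, eq_comm, div_eq_one_iff_eq hc.ne']
    constructor
    · intro h
      have : A ∩ B = A ∪ B := Finset.eq_of_subset_of_card_le
        Finset.inter_subset_union (by exact_mod_cast h.ge)
      have h1 : A ⊆ B := fun x hx => by
        have : x ∈ A ∩ B := this ▸ Finset.mem_union_left _ hx
        exact (Finset.mem_inter.1 this).2
      have h2 : B ⊆ A := fun x hx => by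
        have : x ∈ A ∩ B := this ▸ Finset.mem_union_right _ hx
        exact (Finset.mem_inter.1 this).1
      exact Finset.Subset.antisymm h1 h2
    · rintro rfl; simp
  · intro A B C hA hB hC
    have hAC : (A ∪ C).Nonempty := hA.mono Finset.subset_union_left
    have hAB : (A ∪ B).Nonempty := hA.mono Finset.subset_union_left
    have hBC : (B ∪ C).Nonempty := hB.mono Finset.subset_union_left
    have hu : 0 < ((A ∪ B ∪ C).card : ℝ) := by
      exact_mod_cast Finset.card_pos.2 (hA.mono (by intro x hx; simp [hx]))
    rw [jac_eq A C hAC, jac_eq A B hAB, jac_eq B C hBC]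
    have hABu : 0 < ((A ∪ B).card : ℝ) := by exact_mod_cast Finset.card_pos.2 hAB
    have hBCu : 0 < ((B ∪ C).card : ℝ) := by exact_mod_cast Finset.card_pos.2 hBC
    have hACu : 0 < ((A ∪ C).card : ℝ) := by exact_mod_cast Finset.card_pos.2 hAC
    -- step: d(A,C) ≤ (sAC + m)/u where u = |A∪B∪C|
    have hsplit : (A ∪ C).card + (B \ (A ∪ C)).card = (A ∪ B ∪ C).card := by
      rw [← Finset.card_union_of_disjoint Finset.disjoint_sdiff]
      congr 1
      ext x; simp [Finset.mem_union, Finset.mem_sdiff]; tauto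
    have hle1 : ((A ∪ C) \ (A ∩ C)).card ≤ (A ∪ C).card :=
      Finset.card_le_card (Finset.sdiff_subset)
    have step1 : (((A ∪ C) \ (A ∩ C)).card : ℝ) / (A ∪ C).card ≤
        ((((A ∪ C) \ (A ∩ C)).card + (B \ (A ∪ C)).card : ℕ) : ℝ) / (A ∪ B ∪ C).card := by
      rw [div_le_div_iff₀ hACu hu, ← hsplit]
      push_cast
      nlinarith [Nat.cast_nonneg (α := ℝ) (B \ (A ∪ C)).card,
        (Nat.cast_le (α := ℝ)).2 hle1]
    have hk : ((((A ∪ C) \ (A ∩ C)).card + (B \ (A ∪ C)).card : ℕ) : ℝ) ≤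
        ((((A ∪ B) \ (A ∩ B)).card + ((B ∪ C) \ (B ∩ C)).card : ℕ) : ℝ) := by
      exact_mod_cast key A B C
    have step2 : ((((A ∪ C) \ (A ∩ C)).card + (B \ (A ∪ C)).card : ℕ) : ℝ) / (A ∪ B ∪ C).card ≤
        ((((A ∪ B) \ (A ∩ B)).card + ((B ∪ C) \ (B ∩ C)).card : ℕ) : ℝ) / (A ∪ B ∪ C).card :=
      (div_le_div_iff_of_pos_right hu).mpr hk
    have hd1 : ((A ∪ B).card : ℝ) ≤ (A ∪ B ∪ C).card := by
      exact_mod_cast Finset.card_le_card (by intro x hx; simp only [Finset.mem_union] at hx ⊢; tauto)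
    have hd2 : ((B ∪ C).card : ℝ) ≤ (A ∪ B ∪ C).card := by
      exact_mod_cast Finset.card_le_card (by intro x hx; simp only [Finset.mem_union] at hx ⊢; tauto)
    have step3 : ((((A ∪ B) \ (A ∩ B)).card + ((B ∪ C) \ (B ∩ C)).card : ℕ) : ℝ) / (A ∪ B ∪ C).card ≤
        (((A ∪ B) \ (A ∩ B)).card : ℝ) / (A ∪ B).card + (((B ∪ C) \ (B ∩ C)).card : ℝ) / (B ∪ C).card := by
      push_cast
      rw [add_div]
      refine add_le_add ?_ ?_
      · rw [div_le_div_iff₀ hu hABu]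
        nlinarith [Nat.cast_nonneg (α := ℝ) ((A ∪ B) \ (A ∩ B)).card]
      · rw [div_le_div_iff₀ hu hBCu]
        nlinarith [Nat.cast_nonneg (α := ℝ) ((B ∪ C) \ (B ∩ C)).card]
    linarith
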